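/- For every μ > 0, the function W(y) = −log(μ + √(μ² + |y|²)) on ℝ² satisfies −ΔW(y) = μ/(μ² + |y|²)^{3/2} for every y ∈ ℝ². -/

import Mathlib

open Real

/-- The Laplacian of a function on `ℝ²`, defined as the sum of the second partial
derivatives in the coordinate directions. -/
noncomputable def lap (u : EuclideanSpace ℝ (Fin 2) → ℝ) (x : EuclideanSpace ℝ (Fin 2)) : ℝ :=
  ∑ i : Fin 2,
    fderiv ℝ (fun y => fderiv ℝ u y (EuclideanSpace.single i 1)) x (EuclideanSpace.single i 1)

noncomputable def psi (μ s : ℝ) : ℝ :=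
  -(1 / (Real.sqrt (μ ^ 2 + s) * (μ + Real.sqrt (μ ^ 2 + s))))

lemma sqrt_hasDerivAt (μ : ℝ) (hμ : 0 < μ) (s : ℝ) (hs : 0 ≤ s) :
    HasDerivAt (fun s : ℝ => μ + Real.sqrt (μ ^ 2 + s))
      (1 / (2 * Real.sqrt (μ ^ 2 + s))) s := by
  have ht : (0:ℝ) < μ ^ 2 + s := by positivity
  have h0 : HasDerivAt (fun s : ℝ => μ ^ 2 + s) 1 s := (hasDerivAt_id s).const_add _
  have h1 := (Real.hasDerivAt_sqrt ht.ne').comp s h0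
  simpa using h1.const_add μ

lemma W_hasFDerivAt (μ : ℝ) (hμ : 0 < μ) (z : EuclideanSpace ℝ (Fin 2)) :
    HasFDerivAt (fun z : EuclideanSpace ℝ (Fin 2) =>
        -Real.log (μ + Real.sqrt (μ ^ 2 + ‖z‖ ^ 2)))
      ((psi μ (‖z‖ ^ 2) / 2) • (2 • (innerSL ℝ z))) z := by
  have ht : (0:ℝ) < μ ^ 2 + ‖z‖ ^ 2 := by positivity
  have hr : 0 < Real.sqrt (μ ^ 2 + ‖z‖ ^ 2) := Real.sqrt_pos.2 ht
  have hpos : 0 < μ + Real.sqrt (μ ^ 2 + ‖z‖ ^ 2) := by positivity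
  have h2 : HasDerivAt (fun s : ℝ => -Real.log (μ + Real.sqrt (μ ^ 2 + s)))
      (psi μ (‖z‖ ^ 2) / 2) (‖z‖ ^ 2) := by
    have := (HasDerivAt.comp (‖z‖ ^ 2) (Real.hasDerivAt_log hpos.ne')
      (sqrt_hasDerivAt μ hμ (‖z‖ ^ 2) (by positivity))).neg
    refine this.congr_deriv ?_
    unfold psi
    field_simp
  have hq : HasFDerivAt (fun z : EuclideanSpace ℝ (Fin 2) => ‖z‖ ^ 2)
      (2 • (innerSL ℝ z)) z := (hasStrictFDerivAt_norm_sq z).hasFDerivAt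
  have h3 := h2.comp_hasFDerivAt z hq
  exact h3

lemma fderiv_W_eq (μ : ℝ) (hμ : 0 < μ) (i : Fin 2) :
    (fun z : EuclideanSpace ℝ (Fin 2) =>
        fderiv ℝ (fun z : EuclideanSpace ℝ (Fin 2) =>
          -Real.log (μ + Real.sqrt (μ ^ 2 + ‖z‖ ^ 2))) z (EuclideanSpace.single i 1))
      = fun z => psi μ (‖z‖ ^ 2) * z i := by
  funext z
  rw [(W_hasFDerivAt μ hμ z).fderiv]
  have : (innerSL ℝ z) (EuclideanSpace.single i 1) = z i := by
    simp [EuclideanSpace.inner_single_right]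
  fin_cases i <;> simp [this, EuclideanSpace.inner_single_right] <;> ring

lemma psi_hasDerivAt (μ : ℝ) (hμ : 0 < μ) (s : ℝ) (hs : 0 ≤ s) :
    HasDerivAt (fun s => psi μ s)
      ((μ + 2 * Real.sqrt (μ ^ 2 + s)) /
        (2 * Real.sqrt (μ ^ 2 + s) ^ 3 * (μ + Real.sqrt (μ ^ 2 + s)) ^ 2)) s := by
  have ht : (0:ℝ) < μ ^ 2 + s := by positivity
  have hr : 0 < Real.sqrt (μ ^ 2 + s) := Real.sqrt_pos.2 ht
  have hpos : 0 < μ + Real.sqrt (μ ^ 2 + s) := by positivity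
  have hsq : HasDerivAt (fun s : ℝ => Real.sqrt (μ ^ 2 + s))
      (1 / (2 * Real.sqrt (μ ^ 2 + s))) s := by
    have h0 : HasDerivAt (fun s : ℝ => μ ^ 2 + s) 1 s := (hasDerivAt_id s).const_add _
    exact ((Real.hasDerivAt_sqrt ht.ne').comp s h0).congr_deriv (by ring)
  have hP := hsq.mul (hsq.const_add μ)
  have hne : Real.sqrt (μ ^ 2 + s) * (μ + Real.sqrt (μ ^ 2 + s)) ≠ 0 := by positivity
  have h := (hP.inv hne).neg
  simp only [psi, one_div]
  refine h.congr_deriv ?_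
  simp only [Pi.mul_apply]
  field_simp
  ring

/-- For every `μ > 0`, the function `W(y) = -log(μ + √(μ² + |y|²))` on `ℝ²` satisfies
`-ΔW(y) = μ/(μ² + |y|²)^{3/2}` for every `y ∈ ℝ²`. -/
theorem neg_lap_W (μ : ℝ) (hμ : 0 < μ) :
    ∀ y : EuclideanSpace ℝ (Fin 2),
      -lap (fun z => -Real.log (μ + Real.sqrt (μ ^ 2 + ‖z‖ ^ 2))) y
        = μ / (μ ^ 2 + ‖y‖ ^ 2) ^ ((3 : ℝ) / 2) := by
  intro y
  have ht : (0:ℝ) < μ ^ 2 + ‖y‖ ^ 2 := by positivity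
  set r := Real.sqrt (μ ^ 2 + ‖y‖ ^ 2) with hrdef
  have hr : 0 < r := Real.sqrt_pos.2 ht
  have hr2 : r ^ 2 = μ ^ 2 + ‖y‖ ^ 2 := Real.sq_sqrt ht.le
  set D : ℝ := (μ + 2 * r) / (2 * r ^ 3 * (μ + r) ^ 2) with hD
  have key : ∀ i : Fin 2,
      fderiv ℝ (fun z : EuclideanSpace ℝ (Fin 2) => psi μ (‖z‖ ^ 2) * z i) y
        (EuclideanSpace.single i 1) = psi μ (‖y‖ ^ 2) + D * 2 * (y i) ^ 2 := by
    intro i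
    have hA : HasFDerivAt (fun z : EuclideanSpace ℝ (Fin 2) => psi μ (‖z‖ ^ 2))
        (D • (2 • (innerSL ℝ y))) y := by
      have h3 := (psi_hasDerivAt μ hμ (‖y‖ ^ 2) (by positivity)).comp_hasFDerivAt y
        (hasStrictFDerivAt_norm_sq y).hasFDerivAt
      exact h3
    have hB : HasFDerivAt (fun z : EuclideanSpace ℝ (Fin 2) => (z i : ℝ))
        (EuclideanSpace.proj i : EuclideanSpace ℝ (Fin 2) →L[ℝ] ℝ) y :=
      (EuclideanSpace.proj (𝕜 := ℝ) (ι := Fin 2) i).hasFDerivAt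
    rw [show (fun z : EuclideanSpace ℝ (Fin 2) => psi μ (‖z‖ ^ 2) * z i) =
        (fun z => psi μ (‖z‖ ^ 2)) * (fun z => z i) from rfl, (hA.mul hB).fderiv]
    have h1 : (EuclideanSpace.proj i : EuclideanSpace ℝ (Fin 2) →L[ℝ] ℝ)
        (EuclideanSpace.single i 1) = 1 := by simp [EuclideanSpace.single_apply]
    have h2 : (innerSL ℝ y) (EuclideanSpace.single i 1) = y i := by
      simp [EuclideanSpace.inner_single_right]
    simp only [ContinuousLinearMap.add_apply, ContinuousLinearMap.smul_apply, h1, h2,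
      smul_eq_mul]
    ring
  have hnorm : ‖y‖ ^ 2 = (y 0) ^ 2 + (y 1) ^ 2 := by
    rw [EuclideanSpace.norm_eq, Real.sq_sqrt (by positivity)]
    simp [Fin.sum_univ_two, Real.norm_eq_abs, sq_abs]
  have hpow : (μ ^ 2 + ‖y‖ ^ 2) ^ ((3:ℝ)/2) = r ^ 3 := by
    rw [show (3:ℝ)/2 = (1/2:ℝ)*3 by norm_num, Real.rpow_mul ht.le, ← Real.sqrt_eq_rpow,
      ← hrdef, ← Real.rpow_natCast r 3]
    norm_num
  rw [lap]
  have hw : ∀ i : Fin 2, (fun z : EuclideanSpace ℝ (Fin 2) =>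
      fderiv ℝ (fun z : EuclideanSpace ℝ (Fin 2) =>
        -Real.log (μ + Real.sqrt (μ ^ 2 + ‖z‖ ^ 2))) z (EuclideanSpace.single i 1))
      = fun z => psi μ (‖z‖ ^ 2) * z i := fderiv_W_eq μ hμ
  rw [Fin.sum_univ_two, hw 0, hw 1, key 0, key 1, hpow]
  have hpsi : psi μ (‖y‖ ^ 2) = -(1 / (r * (μ + r))) := by rw [psi, hrdef]
  have hs' : (y 0) ^ 2 + (y 1) ^ 2 = r ^ 2 - μ ^ 2 := by rw [hr2, hnorm]; ring
  rw [hpsi, hD]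
  have hne1 : r ≠ 0 := hr.ne'
  have hne2 : μ + r ≠ 0 := by positivity
  have hy0 : (y 0) ^ 2 = r ^ 2 - μ ^ 2 - (y 1) ^ 2 := by linarith
  rw [hy0]
  field_simp
  ring
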